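/- Let D : I → C be a diagram and i a colimit node of D (i.e., every object of I has at most one arrow into i, and D(i) together with the morphisms D(m) for arrows m into i is a colimit of the restricted diagram D^{→i}). Then the diagrams D and D∖i (D with node i removed) have the same colimits: every colimit of D restricts to a colimit of D∖i by forgetting the injection from D(i), and every colimit of D∖i extends uniquely to a colimit of D. -/

import Mathlib

open CategoryTheory CategoryTheory.Limits

universe v u v' u'

variable {I : Type u'} [Category.{v'} I] {C : Type u} [Category.{v} C]

/-- The inclusion of the full subcategory `I∖i` (all objects other than `i`). -/
def inclWithout (i : I) : ObjectProperty.FullSubcategory (fun j : I => j ≠ i) ⥤ I :=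
  ObjectProperty.ι _

/-- The inclusion of the full subcategory `I^{→i}` (objects `j ≠ i` with an arrow into `i`). -/
def inclInto (i : I) : ObjectProperty.FullSubcategory (fun j : I => j ≠ i ∧ Nonempty (j ⟶ i)) ⥤ I :=
  ObjectProperty.ι _

/-- The cocone on `D^{→i}` with point `D(i)` whose legs are `D(m)` for the (unique)
arrows `m` into `i`. -/
noncomputable def coconeInto (D : I ⥤ C) (i : I)
    (hu : ∀ j : I, Subsingleton (j ⟶ i)) :
    Cocone (inclInto i ⋙ D) where
  pt := D.obj i
  ι :=
    { app := fun j => D.map j.property.2.some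
      naturality := by
        intro j j' f
        have := hu j.obj
        simp only [Functor.comp_map, Functor.const_obj_obj, Functor.const_obj_map,
          Category.comp_id]
        refine (D.map_comp _ _).symm.trans ?_
        congr 1
        exact Subsingleton.elim _ _ }

attribute [local instance] Classical.propDecidable

/-- Restrict a cocone on `D∖i` to a cocone on `D^{→i}`. -/
def restrictInto (D : I ⥤ C) (i : I) (c' : Cocone (inclWithout i ⋙ D)) :
    Cocone (inclInto i ⋙ D) where
  pt := c'.pt
  ι :=
    { app := fun j => c'.ι.app ⟨j.obj, j.property.1⟩
      naturality := fun j j' f => c'.ι.naturality (X := ⟨j.obj, j.property.1⟩)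
        (Y := ⟨j'.obj, j'.property.1⟩) (ObjectProperty.homMk f.hom) }

attribute [local instance] Classical.propDecidable

/-- Extend a cocone on `D∖i` to a cocone on `D`, the leg at `i` being the map
induced by the colimit property of `D(i)`. -/
noncomputable def extendCocone (D : I ⥤ C) (i : I)
    (hu : ∀ j : I, Subsingleton (j ⟶ i)) (hc : IsColimit (coconeInto D i hu))
    (c' : Cocone (inclWithout i ⋙ D)) : Cocone D where
  pt := c'.pt
  ι :=
    { app := fun j =>
        if h : j = i then eqToHom (congrArg D.obj h) ≫ hc.desc (restrictInto D i c')
        else c'.ι.app ⟨j, h⟩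
      naturality := by
        intro j k f
        simp only [Functor.const_obj_obj, Functor.const_obj_map, Category.comp_id]
        by_cases hk : k = i
        · subst hk
          by_cases hj : j = k
          · subst hj
            have := hu j
            have : f = 𝟙 j := Subsingleton.elim _ _
            simp [this]
          · erw [dif_pos rfl, dif_neg hj]
            simp only [eqToHom_refl, Category.id_comp]
            erw [Category.id_comp]
            have hfac := hc.fac (restrictInto D _ c') ⟨j, hj, ⟨f⟩⟩
            have := hu j
            have hs : (⟨f⟩ : Nonempty (j ⟶ k)).some = f := Subsingleton.elim _ _
            simp [coconeInto, restrictInto, hs] at hfac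
            exact hfac
        · erw [dif_neg hk]
          by_cases hj : j = i
          · subst hj
            erw [dif_pos rfl]
            simp only [eqToHom_refl, Category.id_comp]
            erw [Category.id_comp]
            refine hc.uniq (restrictInto D _ c') (D.map f ≫ c'.ι.app ⟨k, hk⟩) ?_
            rintro ⟨l, hl, hn⟩
            have hw := c'.w (j' := ⟨l, hl⟩) (j := ⟨k, hk⟩) (ObjectProperty.homMk (show l ⟶ k from hn.some ≫ f))
            simp only [coconeInto, restrictInto, Functor.const_obj_obj, ← Category.assoc,
              ← D.map_comp]
            simp [inclWithout, Functor.comp_map] at hw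
            exact hw
          · erw [dif_neg hj]
            exact (c'.w (j' := ⟨j, hj⟩) (j := ⟨k, hk⟩) (ObjectProperty.homMk f))
      }

theorem extend_whisker (D : I ⥤ C) (i : I)
    (hu : ∀ j : I, Subsingleton (j ⟶ i)) (hc : IsColimit (coconeInto D i hu))
    (c' : Cocone (inclWithout i ⋙ D)) :
    (extendCocone D i hu hc c').whisker (inclWithout i) = c' := by
  obtain ⟨pt, ι⟩ := c'
  show Cocone.mk pt _ = Cocone.mk pt ι
  refine congrArg (Cocone.mk pt) ?_
  apply NatTrans.ext
  funext ⟨j, hj⟩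
  simp [extendCocone, Cocone.whisker, inclWithout, ObjectProperty.ι, dif_neg hj]

theorem extendCocone_app_eq {D : I ⥤ C} {i : I}
    {hu : ∀ j : I, Subsingleton (j ⟶ i)} {hc : IsColimit (coconeInto D i hu)}
    {c' : Cocone (inclWithout i ⋙ D)} :
    (extendCocone D i hu hc c').ι.app i = hc.desc (restrictInto D i c') := by
  simp [extendCocone]
  exact Category.id_comp _

theorem extendCocone_app_ne {D : I ⥤ C} {i : I}
    {hu : ∀ j : I, Subsingleton (j ⟶ i)} {hc : IsColimit (coconeInto D i hu)}
    {c' : Cocone (inclWithout i ⋙ D)} {j : I} (hj : j ≠ i) :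
    (extendCocone D i hu hc c').ι.app j = c'.ι.app ⟨j, hj⟩ := by
  simp [extendCocone, dif_neg hj]
  exact dif_neg hj

theorem eq_extend (D : I ⥤ C) (i : I)
    (hu : ∀ j : I, Subsingleton (j ⟶ i)) (hc : IsColimit (coconeInto D i hu))
    (c₂ : Cocone D) :
    c₂ = extendCocone D i hu hc (c₂.whisker (inclWithout i)) := by
  obtain ⟨pt, ι⟩ := c₂
  have hι : ι = (extendCocone D i hu hc ((Cocone.mk pt ι).whisker (inclWithout i))).ι := by
    apply NatTrans.ext
    funext j
    by_cases hj : j = i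
    · subst hj
      rw [extendCocone_app_eq]
      refine hc.uniq (restrictInto D _ ((Cocone.mk pt ι).whisker (inclWithout _)))
        (ι.app j) ?_
      rintro ⟨l, hl, hn⟩
      exact (Cocone.mk pt ι).w hn.some
    · rw [extendCocone_app_ne hj]
      rfl
  exact congrArg (Cocone.mk pt) hι

noncomputable def extendIsColimit (D : I ⥤ C) (i : I)
    (hu : ∀ j : I, Subsingleton (j ⟶ i)) (hc : IsColimit (coconeInto D i hu))
    (c' : Cocone (inclWithout i ⋙ D)) (hc' : IsColimit c') :
    IsColimit (extendCocone D i hu hc c') where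
  desc s := hc'.desc (s.whisker (inclWithout i))
  fac s j := by
    by_cases hj : j = i
    · subst hj
      rw [extendCocone_app_eq]
      apply hc.hom_ext
      rintro ⟨l, hl, hn⟩
      have h1 := hc.fac (restrictInto D _ c') ⟨l, hl, hn⟩
      erw [← Category.assoc, h1]
      have h2 := hc'.fac (s.whisker (inclWithout _)) ⟨l, hl⟩
      exact h2.trans (s.w hn.some).symm
    · rw [extendCocone_app_ne hj]
      exact hc'.fac (s.whisker (inclWithout i)) ⟨j, hj⟩
  uniq s m w := by
    refine hc'.uniq (s.whisker (inclWithout i)) m ?_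
    rintro ⟨j, hj⟩
    have := w j
    rw [extendCocone_app_ne hj] at this
    exact this

noncomputable def whiskerIsColimit (D : I ⥤ C) (i : I)
    (hu : ∀ j : I, Subsingleton (j ⟶ i)) (hc : IsColimit (coconeInto D i hu))
    (c : Cocone D) (hcc : IsColimit c) :
    IsColimit (c.whisker (inclWithout i)) where
  desc s := hcc.desc (extendCocone D i hu hc s)
  fac s := by
    rintro ⟨j, hj⟩
    have := hcc.fac (extendCocone D i hu hc s) j
    rw [extendCocone_app_ne hj] at this
    exact this
  uniq s m w := by
    refine hcc.uniq (extendCocone D i hu hc s) m ?_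
    intro j
    by_cases hj : j = i
    · subst hj
      rw [extendCocone_app_eq]
      refine hc.uniq (restrictInto D _ s) (c.ι.app j ≫ m) ?_
      rintro ⟨l, hl, hn⟩
      show D.map hn.some ≫ c.ι.app j ≫ m = s.ι.app ⟨l, hl⟩
      rw [← Category.assoc, c.w hn.some]
      exact w ⟨l, hl⟩
    · rw [extendCocone_app_ne hj]
      exact w ⟨j, hj⟩

/-- If `i` is a colimit node of `D` (every object has at most one arrow into `i`, and
`D(i)` with the maps `D(m)` is a colimit of `D^{→i}`), then `D` and `D∖i` have the same
colimits: every colimit of `D` restricts (by forgetting the injection from `D(i)`) to a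
colimit of `D∖i`, and every colimit of `D∖i` extends uniquely to a cocone on `D`, which
is a colimit. -/
theorem colimitNode_removal (D : I ⥤ C) (i : I)
    (hu : ∀ j : I, Subsingleton (j ⟶ i))
    (hc : IsColimit (coconeInto D i hu)) :
    (∀ c : Cocone D, Nonempty (IsColimit c) →
        Nonempty (IsColimit (c.whisker (inclWithout i)))) ∧
      (∀ c' : Cocone (inclWithout i ⋙ D), IsColimit c' →
        ∃ c : Cocone D, c.whisker (inclWithout i) = c' ∧ Nonempty (IsColimit c) ∧
          ∀ c₂ : Cocone D, c₂.whisker (inclWithout i) = c' → c₂ = c) := by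
  constructor
  · rintro c ⟨hcc⟩
    exact ⟨whiskerIsColimit D i hu hc c hcc⟩
  · intro c' hc'
    refine ⟨extendCocone D i hu hc c', extend_whisker D i hu hc c',
      ⟨extendIsColimit D i hu hc c' hc'⟩, ?_⟩
    intro c₂ h
    exact (eq_extend D i hu hc c₂).trans (congrArg (extendCocone D i hu hc) h)
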